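/- Let X and Q be real Hilbert spaces, T : X → Q a continuous linear map, and Q̄ ⊆ Q a closed subspace; write each q ∈ Q as q = q̃ + q̄ with q̄ the orthogonal projection of q onto Q̄ and q̃ ∈ Q̄⊥. Let C_IS > 0, C₀ ≥ 1, and 0 ≤ ε ≤ min{C_IS, 1}/5 be constants. Assume: (i) for every q̃ ∈ Q̄⊥ there exists τ ∈ X with ‖τ‖ ≤ ‖q̃‖, ⟨T τ, q̃⟩ ≥ C_IS ‖q̃‖², and ⟨T τ, r⟩ = 0 for all r ∈ Q̄; (ii) for every q̄ ∈ Q̄ there exists m ∈ X with ‖m‖ ≤ C₀ ‖q̄‖ and ‖T m − q̄‖ ≤ ε ‖q̄‖. Then for every q ∈ Q the supremum over nonzero σ ∈ X of ⟨T σ, q⟩ / ‖σ‖ is at least C′ ‖q‖, where C′ = min{(9/10) C_IS, 7/10} / (2 C₀). -/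

import Mathlib

open scoped RealInnerProductSpace

/-- Extension of an inf-sup condition from constrained spaces to the full space: if (i) on
the orthogonal complement `Q̄⊥` one has an inf-sup condition realized by elements `τ` whose
image is orthogonal to `Q̄`, and (ii) every element of `Q̄` admits an approximate preimage,
then the full inf-sup condition holds with constant `min{(9/10)C_IS, 7/10}/(2C₀)`. -/
theorem inf_sup_without_constraints
    {X Q : Type*} [NormedAddCommGroup X] [InnerProductSpace ℝ X] [CompleteSpace X]
    [NormedAddCommGroup Q] [InnerProductSpace ℝ Q] [CompleteSpace Q]
    (T : X →L[ℝ] Q) (Qbar : Submodule ℝ Q) (hQbarClosed : IsClosed (Qbar : Set Q))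
    (C_IS C₀ ε : ℝ) (hCIS : 0 < C_IS) (hC₀ : 1 ≤ C₀)
    (hε0 : 0 ≤ ε) (hε : ε ≤ min C_IS 1 / 5)
    -- (i) inf-sup with orthogonality on the mean-free part
    (h1 : ∀ qt ∈ Qbarᗮ, ∃ τ : X, ‖τ‖ ≤ ‖qt‖ ∧ C_IS * ‖qt‖ ^ 2 ≤ ⟪T τ, qt⟫ ∧
      ∀ r ∈ Qbar, ⟪T τ, r⟫ = 0)
    -- (ii) approximate preimages of the constrained part
    (h2 : ∀ qb ∈ Qbar, ∃ m : X, ‖m‖ ≤ C₀ * ‖qb‖ ∧ ‖T m - qb‖ ≤ ε * ‖qb‖) :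
    ∀ q : Q, (min ((9 / 10) * C_IS) (7 / 10) / (2 * C₀)) * ‖q‖ ≤
      ⨆ σ : {σ : X // σ ≠ 0}, ⟪T σ.1, q⟫ / ‖σ.1‖ := by
  intro q
  set c := min ((9 / 10) * C_IS) (7 / 10) with hc
  have hC₀pos : (0:ℝ) < C₀ := by linarith
  have hcpos : 0 < c := lt_min (by linarith) (by norm_num)
  have hε1 : ε ≤ C_IS / 5 := le_trans hε (by
    have := min_le_left C_IS 1; linarith)
  have hε2 : ε ≤ 1 / 5 := le_trans hε (by
    have := min_le_right C_IS 1; linarith)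
  have hbdd : BddAbove (Set.range fun σ : {σ : X // σ ≠ 0} => ⟪T σ.1, q⟫ / ‖σ.1‖) := by
    refine ⟨‖T‖ * ‖q‖, ?_⟩
    rintro x ⟨σ, rfl⟩
    have hcs : ⟪T σ.1, q⟫ ≤ ‖T σ.1‖ * ‖q‖ :=
      (le_abs_self _).trans (abs_real_inner_le_norm _ _)
    have hop : ‖T σ.1‖ ≤ ‖T‖ * ‖σ.1‖ := T.le_opNorm σ.1
    have hσ : 0 < ‖σ.1‖ := norm_pos_iff.mpr σ.2
    rw [div_le_iff₀ hσ]
    nlinarith [norm_nonneg q, norm_nonneg (T σ.1)]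
  by_cases hq : q = 0
  · subst hq
    rw [norm_zero, mul_zero]
    exact Real.iSup_nonneg fun σ => by simp
  · have hqpos : 0 < ‖q‖ := norm_pos_iff.mpr hq
    haveI : CompleteSpace Qbar := hQbarClosed.completeSpace_coe
    obtain ⟨qb, hqb, qt, hqt, hdec⟩ := Qbar.exists_add_mem_mem_orthogonal q
    obtain ⟨τ, hτ1, hτ2, hτ3⟩ := h1 qt hqt
    obtain ⟨m, hm1, hm2⟩ := h2 qb hqb
    have horth : ⟪qb, qt⟫ = 0 := (Submodule.mem_orthogonal _ _).1 hqt qb hqb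
    have hnormsq : ‖q‖ ^ 2 = ‖qb‖ ^ 2 + ‖qt‖ ^ 2 := by
      rw [hdec, norm_add_sq_real, horth]; ring
    have hqb_le : ‖qb‖ ≤ ‖q‖ := by nlinarith [norm_nonneg qb, norm_nonneg qt, norm_nonneg q]
    have hqt_le : ‖qt‖ ≤ ‖q‖ := by nlinarith [norm_nonneg qb, norm_nonneg qt, norm_nonneg q]
    set σ := m + τ with hσdef
    -- inner product lower bound
    have hTτq : C_IS * ‖qt‖ ^ 2 ≤ ⟪T τ, q⟫ := by
      have : ⟪T τ, q⟫ = ⟪T τ, qb⟫ + ⟪T τ, qt⟫ := by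
        rw [hdec, inner_add_right]
      rw [this, hτ3 qb hqb, zero_add]; exact hτ2
    have hTmq : ‖qb‖ ^ 2 - ε * ‖qb‖ * ‖q‖ ≤ ⟪T m, q⟫ := by
      have hsplit : ⟪T m, q⟫ = ⟪T m - qb, q⟫ + ⟪qb, q⟫ := by
        rw [inner_sub_left]; ring
      have hqbq : ⟪qb, q⟫ = ‖qb‖ ^ 2 := by
        rw [hdec, inner_add_right, horth, real_inner_self_eq_norm_sq]; ring
      have hcs : -(‖T m - qb‖ * ‖q‖) ≤ ⟪T m - qb, q⟫ := by
        have := abs_real_inner_le_norm (T m - qb) q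
        have := neg_abs_le ⟪T m - qb, q⟫
        linarith
      have : ‖T m - qb‖ * ‖q‖ ≤ ε * ‖qb‖ * ‖q‖ := by
        apply mul_le_mul_of_nonneg_right hm2 (norm_nonneg q)
      rw [hsplit, hqbq]; linarith
    have hTσq : c * ‖q‖ ^ 2 ≤ ⟪T σ, q⟫ := by
      have hσeq : ⟪T σ, q⟫ = ⟪T m, q⟫ + ⟪T τ, q⟫ := by
        rw [hσdef, map_add, inner_add_left]
      have hmin1 : c ≤ (9 / 10) * C_IS := min_le_left _ _
      have hmin2 : c ≤ 7 / 10 := min_le_right _ _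
      have hbq : ε * ‖qb‖ * ‖q‖ ≤ ε * ‖qb‖ * (‖qb‖ + ‖qt‖) := by
        have hle : ‖q‖ ≤ ‖qb‖ + ‖qt‖ := by rw [hdec]; exact norm_add_le _ _
        exact mul_le_mul_of_nonneg_left hle (mul_nonneg hε0 (norm_nonneg qb))
      rw [hσeq]
      nlinarith [norm_nonneg qb, norm_nonneg qt, sq_nonneg (‖qb‖ - ‖qt‖),
        sq_nonneg (‖qb‖ + ‖qt‖), mul_nonneg (norm_nonneg qb) (norm_nonneg qt)]
    have hσne : σ ≠ 0 := by
      intro h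
      have hz : ⟪T σ, q⟫ = 0 := by rw [h, map_zero, inner_zero_left]
      have hp := mul_pos hcpos (pow_pos hqpos 2)
      linarith
    have hσnorm : ‖σ‖ ≤ 2 * C₀ * ‖q‖ := by
      calc ‖σ‖ ≤ ‖m‖ + ‖τ‖ := norm_add_le _ _
        _ ≤ C₀ * ‖qb‖ + ‖qt‖ := add_le_add hm1 hτ1
        _ ≤ C₀ * ‖q‖ + C₀ * ‖q‖ := by
            have h1' : C₀ * ‖qb‖ ≤ C₀ * ‖q‖ :=
              mul_le_mul_of_nonneg_left hqb_le hC₀pos.le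
            have h2' : ‖qt‖ ≤ C₀ * ‖q‖ :=
              hqt_le.trans (le_mul_of_one_le_left (norm_nonneg q) hC₀)
            linarith
        _ = 2 * C₀ * ‖q‖ := by ring
    have hσpos : 0 < ‖σ‖ := norm_pos_iff.mpr hσne
    have hfinal : c / (2 * C₀) * ‖q‖ ≤ ⟪T σ, q⟫ / ‖σ‖ := by
      rw [le_div_iff₀ hσpos]
      have hnn : 0 ≤ c / (2 * C₀) * ‖q‖ := by positivity
      calc c / (2 * C₀) * ‖q‖ * ‖σ‖ ≤ c / (2 * C₀) * ‖q‖ * (2 * C₀ * ‖q‖) :=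
            mul_le_mul_of_nonneg_left hσnorm hnn
        _ = c * ‖q‖ ^ 2 := by field_simp
        _ ≤ ⟪T σ, q⟫ := hTσq
    exact le_trans hfinal (le_ciSup hbdd ⟨σ, hσne⟩)
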